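/- Let r be a nonnegative function on pairs of coprime positive integers (p,q) with p < q such that ∑_{(p,q)} r(p,q)/((p+q)q) < ∞. Define l_r(ξ) := ∑_{i=0}^∞ r(q_i(ξ), q_{i+1}(ξ)) for ξ ∈ (0,1/2] irrational. Then l_r is integrable on (0,1/2] and ∫_0^{1/2} l_r(ξ) dξ = ∑_{p/q ∈ (0,1), gcd(p,q)=1, p<q} r(p,q)/((p+q)·q). -/

import Mathlib

open MeasureTheory

/-- The Gauss map `x ↦ {1/x}`. -/
noncomputable def gaussMap (x : ℝ) : ℝ := Int.fract x⁻¹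

/-- `partQuotN ξ i = a_{i+1}(ξ)`, the `(i+1)`-st partial quotient of the
continued fraction of `ξ ∈ (0,1)`. -/
noncomputable def partQuotN (ξ : ℝ) (i : ℕ) : ℕ := (⌊(gaussMap^[i] ξ)⁻¹⌋).toNat

/-- Denominators of the continued fraction convergents of `ξ ∈ (0,1)`:
`q_0 = 1`, `q_1 = a_1`, `q_{i+2} = a_{i+2} q_{i+1} + q_i`. -/
noncomputable def convDen (ξ : ℝ) : ℕ → ℕ
  | 0 => 1
  | 1 => partQuotN ξ 0
  | (i + 2) => partQuotN ξ (i + 1) * convDen ξ (i + 1) + convDen ξ i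

/-- The Lévy function `l_r(ξ) = ∑_{i≥0} r(q_i(ξ), q_{i+1}(ξ))`. -/
noncomputable def levyFn (r : ℕ → ℕ → ℝ) (ξ : ℝ) : ℝ :=
  ∑' i : ℕ, r (convDen ξ i) (convDen ξ (i + 1))

/-- Coprime pairs `(p,q)` of positive integers with `p < q`. -/
def CoprimePairs : Type :=
  {x : ℕ × ℕ // 0 < x.1 ∧ x.1 < x.2 ∧ Nat.Coprime x.1 x.2}


namespace Stmt10


/-- `mat l = ((q, q'), (p, p'))`: convergent data of `[0; l]`. -/
def mat : List ℕ → (ℕ × ℕ) × (ℕ × ℕ)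
  | [] => ((1, 0), (0, 1))
  | a :: l => ((a * (mat l).1.1 + (mat l).2.1, a * (mat l).1.2 + (mat l).2.2),
      ((mat l).1.1, (mat l).1.2))

def qq (l : List ℕ) : ℕ := (mat l).1.1
def qq' (l : List ℕ) : ℕ := (mat l).1.2
def pp (l : List ℕ) : ℕ := (mat l).2.1
def pp' (l : List ℕ) : ℕ := (mat l).2.2

@[simp] lemma qq_nil : qq [] = 1 := rfl
@[simp] lemma qq'_nil : qq' [] = 0 := rfl
@[simp] lemma pp_nil : pp [] = 0 := rfl
@[simp] lemma pp'_nil : pp' [] = 1 := rfl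
@[simp] lemma qq_cons (a l) : qq (a :: l) = a * qq l + pp l := rfl
@[simp] lemma qq'_cons (a l) : qq' (a :: l) = a * qq' l + pp' l := rfl
@[simp] lemma pp_cons (a l) : pp (a :: l) = qq l := rfl
@[simp] lemma pp'_cons (a l) : pp' (a :: l) = qq' l := rfl

lemma mat_append (l : List ℕ) (a : ℕ) :
    qq (l ++ [a]) = a * qq l + qq' l ∧ qq' (l ++ [a]) = qq l ∧
    pp (l ++ [a]) = a * pp l + pp' l ∧ pp' (l ++ [a]) = pp l := by
  induction l with
  | nil => simp [qq, qq', pp, pp', mat]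
  | cons b l ih =>
    obtain ⟨h1, h2, h3, h4⟩ := ih
    refine ⟨?_, ?_, ?_, ?_⟩ <;> simp [h1, h2, h3, h4] <;> ring

lemma det (l : List ℕ) : (qq l : ℤ) * pp' l - qq' l * pp l = (-1) ^ l.length := by
  induction l with
  | nil => simp
  | cons a l ih =>
    simp only [qq_cons, qq'_cons, pp_cons, pp'_cons, List.length_cons, pow_succ]
    push_cast
    nlinarith [ih]

lemma one_le_qq {l : List ℕ} (h : ∀ a ∈ l, 1 ≤ a) : 1 ≤ qq l := by
  induction l with
  | nil => simp
  | cons a l ih =>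
    have ha : 1 ≤ a := h a (by simp)
    have := ih (fun b hb => h b (by simp [hb]))
    simp only [qq_cons]
    calc 1 ≤ a * qq l := Nat.one_le_iff_ne_zero.2 (Nat.mul_ne_zero (by omega) (by omega))
    _ ≤ a * qq l + pp l := Nat.le_add_right _ _

lemma bounds {l : List ℕ} (h : ∀ a ∈ l, 1 ≤ a) (hne : l ≠ []) :
    pp' l ≤ pp l ∧ qq' l ≤ qq l ∧ pp l ≤ qq l ∧ pp' l ≤ qq' l ∧ 1 ≤ pp l ∧
      pp' l + qq' l < pp l + qq l ∧ 1 ≤ pp' l + qq' l := by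
  induction l with
  | nil => exact absurd rfl hne
  | cons a l ih =>
    have ha : 1 ≤ a := h a (by simp)
    have hl : ∀ b ∈ l, 1 ≤ b := fun b hb => h b (by simp [hb])
    rcases eq_or_ne l [] with rfl | hlne
    · simp [qq, qq', pp, pp', mat]; omega
    · obtain ⟨h1, h2, h3, h4, h5, h6, h7⟩ := ih hl hlne
      have hq := one_le_qq hl
      have key : a * qq' l + pp' l < a * qq l + pp l := by nlinarith
      simp only [qq_cons, qq'_cons, pp_cons, pp'_cons]
      refine ⟨h2, le_of_lt key, by nlinarith, by nlinarith, hq, by omega, ?_⟩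
      have : qq' l ≤ a * qq' l := Nat.le_mul_of_pos_left _ (by omega)
      omega

/-- head condition: `GoodList l` means all entries positive and first entry `≥ 2`. -/
def GoodList (l : List ℕ) : Prop := (∀ a ∈ l, 1 ≤ a) ∧ 2 ≤ l.headI

lemma GoodList.ne_nil {l : List ℕ} (h : GoodList l) : l ≠ [] := by
  rintro rfl; simpa using h.2

lemma strictq {l : List ℕ} (h : GoodList l) : 1 ≤ qq' l ∧ qq' l < qq l := by
  obtain ⟨hall, hhead⟩ := h
  cases l with
  | nil => simp at hhead
  | cons a m =>
    have ha : 2 ≤ a := by simpa using hhead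
    rcases eq_or_ne m [] with rfl | hm
    · simp [qq, qq', pp, pp', mat]; omega
    · have hml : ∀ b ∈ m, 1 ≤ b := fun b hb => hall b (by simp [hb])
      have hq := one_le_qq hml
      obtain ⟨h1, h2, h3, h4, h5, h6, h7⟩ := bounds hml hm
      have ha1 : 1 ≤ a := by omega
      simp only [qq_cons, qq'_cons]
      constructor
      · nlinarith
      · nlinarith

lemma coprime_qq'_qq (l : List ℕ) : Nat.Coprime (qq' l) (qq l) := by
  have hd := det l
  have : ((Nat.gcd (qq' l) (qq l) : ℤ)) ∣ 1 := by
    have h1 : ((Nat.gcd (qq' l) (qq l) : ℤ)) ∣ (qq l : ℤ) :=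
      Int.natCast_dvd_natCast.2 (Nat.gcd_dvd_right _ _)
    have h2 : ((Nat.gcd (qq' l) (qq l) : ℤ)) ∣ (qq' l : ℤ) :=
      Int.natCast_dvd_natCast.2 (Nat.gcd_dvd_left _ _)
    have : ((Nat.gcd (qq' l) (qq l) : ℤ)) ∣ ((-1) ^ l.length : ℤ) := by
      rw [← hd]; exact dvd_sub (h1.mul_right _) (h2.mul_right _)
    rcases Nat.even_or_odd l.length with he | ho
    · rwa [he.neg_one_pow] at this
    · rw [ho.neg_one_pow] at this; exact (dvd_neg).1 this
  have h1 : (Nat.gcd (qq' l) (qq l)) ∣ 1 := by exact_mod_cast this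
  exact Nat.dvd_one.1 h1


lemma qq_singleton (a : ℕ) : qq [a] = a := by simp [qq, mat]
lemma qq'_singleton (a : ℕ) : qq' [a] = 1 := by simp [qq', mat]

lemma euclid_unique {a b u v Q : ℕ} (hu : u < Q) (hv : v < Q)
    (h : a * Q + u = b * Q + v) : a = b ∧ u = v := by
  have hQ : 0 < Q := by omega
  have ha : (u + a * Q) / Q = a := by rw [Nat.add_mul_div_right _ _ hQ, Nat.div_eq_of_lt hu]; omega
  have hb : (v + b * Q) / Q = b := by rw [Nat.add_mul_div_right _ _ hQ, Nat.div_eq_of_lt hv]; omega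
  have hab : a = b := by rw [← ha, ← hb]; congr 1; omega
  subst hab
  omega

lemma goodList_append {l : List ℕ} {a : ℕ} (h : GoodList (l ++ [a])) (hne : l ≠ []) :
    GoodList l := by
  constructor
  · exact fun b hb => h.1 b (by simp [hb])
  · cases l with
    | nil => exact absurd rfl hne
    | cons b k => simpa using h.2

lemma pair_inj : ∀ q : ℕ, ∀ l m : List ℕ, GoodList l → GoodList m →
    qq l = q → qq m = q → qq' l = qq' m → l = m := by
  intro q
  induction q using Nat.strong_induction_on with
  | _ q ih =>
    intro l m hl hm hql hqm hq'
    obtain ⟨l₀, a, rfl⟩ : ∃ l₀ a, l = l₀ ++ [a] := by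
      rcases List.eq_nil_or_concat l with h | ⟨l₀, a, h⟩
      · exact absurd h hl.ne_nil
      · exact ⟨l₀, a, by simpa using h⟩
    obtain ⟨m₀, b, rfl⟩ : ∃ m₀ b, m = m₀ ++ [b] := by
      rcases List.eq_nil_or_concat m with h | ⟨m₀, b, h⟩
      · exact absurd h hm.ne_nil
      · exact ⟨m₀, b, by simpa using h⟩
    obtain ⟨hqa, hq'a, -, -⟩ := mat_append l₀ a
    obtain ⟨hqb, hq'b, -, -⟩ := mat_append m₀ b
    rcases eq_or_ne l₀ [] with rfl | hl₀
    · rcases eq_or_ne m₀ [] with rfl | hm₀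
      · have : a = b := by
          simp only [qq_nil, qq'_nil] at hqa hqb
          omega
        rw [this]
      · exfalso
        have hgm₀ : GoodList m₀ := goodList_append hm hm₀
        have := strictq hgm₀
        simp only [qq_nil, qq'_nil] at hq'a
        omega
    · rcases eq_or_ne m₀ [] with rfl | hm₀
      · exfalso
        have hgl₀ : GoodList l₀ := goodList_append hl hl₀
        have := strictq hgl₀
        simp only [qq_nil, qq'_nil] at hq'b
        omega
      · have hgl₀ : GoodList l₀ := goodList_append hl hl₀
        have hgm₀ : GoodList m₀ := goodList_append hm hm₀
        obtain ⟨hsl1, hsl2⟩ := strictq hgl₀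
        obtain ⟨hsm1, hsm2⟩ := strictq hgm₀
        have hq0 : qq l₀ = qq m₀ := by omega
        rw [← hq0] at hqb hsm2
        have heq : a * qq l₀ + qq' l₀ = b * qq l₀ + qq' m₀ := by omega
        obtain ⟨rfl, h2⟩ := euclid_unique hsl2 hsm2 heq
        have ha1 : 1 ≤ a := hl.1 a (by simp)
        have hmono : qq l₀ ≤ a * qq l₀ := Nat.le_mul_of_pos_left _ (by omega)
        have hlt : qq l₀ < q := by omega
        rw [ih (qq l₀) hlt l₀ m₀ hgl₀ hgm₀ rfl hq0.symm h2]

lemma pair_surj : ∀ q p : ℕ, 0 < p → p < q → Nat.Coprime p q →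
    ∃ l : List ℕ, GoodList l ∧ qq l = q ∧ qq' l = p := by
  intro q
  induction q using Nat.strong_induction_on with
  | _ q ih =>
    intro p hp hpq hco
    rcases eq_or_ne p 1 with rfl | hp1
    · refine ⟨[q], ⟨by simp; omega, by simp; omega⟩, qq_singleton q, qq'_singleton q⟩
    · have hp2 : 2 ≤ p := by omega
      set a := q / p with ha
      set u := q % p with hu
      have hu0 : u ≠ 0 := by
        intro h0
        have : p ∣ q := Nat.dvd_of_mod_eq_zero (by omega)
        have := Nat.Coprime.eq_one_of_dvd hco this
        omega
      have hup : u < p := Nat.mod_lt _ (by omega)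
      have hcu : Nat.Coprime u p := by
        have : Nat.gcd p q = Nat.gcd (q % p) p := (Nat.gcd_rec p q)
        unfold Nat.Coprime at hco ⊢
        rw [hu, ← this, hco]
      obtain ⟨l₀, hgl₀, hql₀, hq'l₀⟩ := ih p hpq u (by omega) hup hcu
      have ha1 : 1 ≤ a := Nat.one_le_div_iff (by omega) |>.2 (le_of_lt hpq)
      refine ⟨l₀ ++ [a], ?_, ?_, ?_⟩
      · constructor
        · intro x hx
          rcases List.mem_append.1 hx with h | h
          · exact hgl₀.1 x h
          · simp at h; omega
        · cases l₀ with
          | nil => exact absurd rfl hgl₀.ne_nil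
          | cons c k => simpa using hgl₀.2
      · rw [(mat_append l₀ a).1, hql₀, hq'l₀, ha, hu]
        exact (Nat.div_add_mod' q p)
      · rw [(mat_append l₀ a).2.1, hql₀]


end Stmt10
namespace Stmt10

lemma gauss_mem {ξ : ℝ} (h1 : Irrational ξ) (h2 : ξ ∈ Set.Ioo (0:ℝ) 1) :
    Irrational (gaussMap ξ) ∧ gaussMap ξ ∈ Set.Ioo (0:ℝ) 1 := by
  have hinv : Irrational ξ⁻¹ := h1.inv
  have hfr : Irrational (Int.fract ξ⁻¹) := by
    rw [Int.fract]; exact hinv.sub_intCast _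
  exact ⟨hfr, lt_of_le_of_ne (Int.fract_nonneg _) (Ne.symm hfr.ne_zero),
    Int.fract_lt_one _⟩

lemma partQuotN_succ (ξ : ℝ) (k : ℕ) : partQuotN ξ (k+1) = partQuotN (gaussMap ξ) k := by
  simp [partQuotN, Function.iterate_succ_apply]

lemma key0 {a : ℕ} (ha : 1 ≤ a) {m M : ℝ} (hm : 0 ≤ m) (hm1 : m ≤ 1)
    (hM0 : 0 ≤ M) (hM : M ≤ 1) {ξ : ℝ} :
    (ξ ∈ Set.Ioo (0:ℝ) 1 ∧ (⌊ξ⁻¹⌋).toNat = a ∧ Int.fract ξ⁻¹ ∈ Set.Ioo m M) ↔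
      ξ ∈ Set.Ioo ((a + M)⁻¹) ((a + m)⁻¹) := by
  have ha' : (1:ℝ) ≤ a := by exact_mod_cast ha
  have hm0 : (0:ℝ) < a + m := by linarith
  have hM0' : (0:ℝ) < a + M := by linarith
  constructor
  · rintro ⟨⟨hx0, hx1⟩, hfl, hf1, hf2⟩
    have hinv1 : 1 < ξ⁻¹ := one_lt_inv_iff₀.2 ⟨hx0, hx1⟩
    have hfl' : ⌊ξ⁻¹⌋ = (a:ℤ) := by
      have h0 : (0:ℤ) ≤ ⌊ξ⁻¹⌋ := Int.floor_nonneg.2 (by linarith)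
      omega
    have hfr : Int.fract ξ⁻¹ = ξ⁻¹ - a := by
      rw [Int.fract, hfl']; norm_num
    rw [hfr] at hf1 hf2
    have hlb : a + m < ξ⁻¹ := by linarith
    have hub : ξ⁻¹ < a + M := by linarith
    have hxpos : (0:ℝ) < ξ⁻¹ := by linarith
    constructor
    · have := inv_strictAnti₀ hxpos hub
      rwa [inv_inv] at this
    · have := inv_strictAnti₀ hm0 hlb
      rwa [inv_inv] at this
  · rintro ⟨h1', h2'⟩
    have hx0 : 0 < ξ := lt_trans (inv_pos.2 hM0') h1'
    have hinv_lb : a + m < ξ⁻¹ := by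
      have := inv_strictAnti₀ hx0 h2'
      rwa [inv_inv] at this
    have hinv_ub : ξ⁻¹ < a + M := by
      have := inv_strictAnti₀ (inv_pos.2 hM0') h1'
      rwa [inv_inv] at this
    have hinv1 : 1 < ξ⁻¹ := by linarith
    have hx1 : ξ < 1 := by
      have := inv_strictAnti₀ zero_lt_one hinv1
      rwa [inv_inv, inv_one] at this
    have hfl : ⌊ξ⁻¹⌋ = (a:ℤ) := by
      rw [Int.floor_eq_iff]
      constructor
      · push_cast; linarith
      · push_cast; linarith
    refine ⟨⟨hx0, hx1⟩, by simp [hfl], ?_, ?_⟩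
    · rw [Int.fract, hfl]; push_cast; linarith
    · rw [Int.fract, hfl]; push_cast; linarith

end Stmt10
namespace Stmt10

lemma key {a : ℕ} (ha : 1 ≤ a) {u v : ℝ} (hu : u ∈ Set.Icc (0:ℝ) 1)
    (hv : v ∈ Set.Icc (0:ℝ) 1) {ξ : ℝ} :
    (ξ ∈ Set.Ioo (0:ℝ) 1 ∧ (⌊ξ⁻¹⌋).toNat = a ∧ Int.fract ξ⁻¹ ∈ Set.uIoo u v) ↔
      ξ ∈ Set.uIoo ((a + u)⁻¹) ((a + v)⁻¹) := by
  have ha' : (1:ℝ) ≤ a := by exact_mod_cast ha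
  have hu0 : (0:ℝ) < a + u := by have := hu.1; linarith
  have hv0 : (0:ℝ) < a + v := by have := hv.1; linarith
  rcases le_total u v with h | h
  · rw [Set.uIoo_of_le h, Set.uIoo_of_ge (inv_anti₀ hu0 (by linarith))]
    exact key0 ha hu.1 hu.2 hv.1 hv.2
  · rw [Set.uIoo_of_ge h, Set.uIoo_of_le (inv_anti₀ hv0 (by linarith))]
    exact key0 ha hv.1 hv.2 hu.1 hu.2

noncomputable def xe (l : List ℕ) : ℝ := pp l / qq l
noncomputable def ye (l : List ℕ) : ℝ := (pp l + pp' l) / (qq l + qq' l)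

def cylQ (l : List ℕ) : Set ℝ :=
  {ξ | Irrational ξ ∧ ξ ∈ Set.Ioo (0:ℝ) 1 ∧ ∀ k < l.length, partQuotN ξ k = l.getD k 0}

lemma qq_pos {l : List ℕ} (h : ∀ a ∈ l, 1 ≤ a) : (0:ℝ) < qq l := by
  exact_mod_cast Nat.lt_of_lt_of_le Nat.zero_lt_one (one_le_qq h)

lemma xe_cons (a : ℕ) (ha : 1 ≤ a) (t : List ℕ) (h : ∀ b ∈ t, 1 ≤ b) :
    xe (a :: t) = ((a : ℝ) + xe t)⁻¹ := by
  have hq : (0:ℝ) < qq t := qq_pos h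
  have hd : (0:ℝ) < (a:ℝ) * qq t + pp t := by
    have ha' : (1:ℝ) ≤ a := by exact_mod_cast ha
    have hp : (0:ℝ) ≤ pp t := by positivity
    nlinarith
  unfold xe
  simp only [pp_cons, qq_cons]
  push_cast
  have hstep : (a:ℝ) + (pp t : ℝ) / qq t = ((a:ℝ) * qq t + pp t) / qq t := by
    field_simp
  rw [hstep, inv_div]

lemma ye_cons (a : ℕ) (ha : 1 ≤ a) (t : List ℕ) (h : ∀ b ∈ t, 1 ≤ b) :
    ye (a :: t) = ((a : ℝ) + ye t)⁻¹ := by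
  have hq : (0:ℝ) < (qq t : ℝ) + qq' t := by
    have := qq_pos h; positivity
  unfold ye
  simp only [pp_cons, qq_cons, pp'_cons, qq'_cons]
  push_cast
  have hstep : (a:ℝ) + ((pp t : ℝ) + pp' t) / ((qq t : ℝ) + qq' t)
      = ((a:ℝ) * qq t + pp t + ((a:ℝ) * qq' t + pp' t)) / ((qq t : ℝ) + qq' t) := by
    field_simp; ring
  rw [hstep, inv_div]

lemma endpoints_mem {l : List ℕ} (h : ∀ a ∈ l, 1 ≤ a) :
    xe l ∈ Set.Icc (0:ℝ) 1 ∧ ye l ∈ Set.Icc (0:ℝ) 1 := by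
  rcases eq_or_ne l [] with rfl | hne
  · constructor <;> constructor <;> norm_num [xe, ye]
  · obtain ⟨h1, h2, h3, h4, h5, h6, h7⟩ := bounds h hne
    have hq : (0:ℝ) < qq l := qq_pos h
    have hq2 : (0:ℝ) < (qq l : ℝ) + qq' l := by positivity
    have c3 : (pp l : ℝ) ≤ qq l := by exact_mod_cast h3
    have c34 : (pp l : ℝ) + pp' l ≤ (qq l : ℝ) + qq' l := by
      have : pp l + pp' l ≤ qq l + qq' l := by omega
      exact_mod_cast this
    unfold xe ye
    refine ⟨⟨by positivity, ?_⟩, ⟨by positivity, ?_⟩⟩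
    · rw [div_le_one hq]; exact c3
    · rw [div_le_one hq2]; push_cast; exact c34

end Stmt10
namespace Stmt10

lemma forall_lt_succ' {n : ℕ} {P : ℕ → Prop} :
    (∀ k < n + 1, P k) ↔ P 0 ∧ ∀ k < n, P (k + 1) := by
  constructor
  · exact fun h => ⟨h 0 (Nat.succ_pos n), fun k hk => h (k+1) (by omega)⟩
  · rintro ⟨h0, h⟩ k hk
    cases k with
    | zero => exact h0
    | succ j => exact h j (by omega)

lemma cylQ_eq : ∀ l : List ℕ, (∀ a ∈ l, 1 ≤ a) →
    cylQ l = {ξ | Irrational ξ} ∩ Set.uIoo (xe l) (ye l) := by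
  intro l
  induction l with
  | nil =>
    intro _
    ext ξ
    have h01 : Set.uIoo (xe ([] : List ℕ)) (ye ([] : List ℕ)) = Set.Ioo (0:ℝ) 1 := by
      have hx : xe ([] : List ℕ) = 0 := by norm_num [xe]
      have hy : ye ([] : List ℕ) = 1 := by norm_num [ye]
      rw [hx, hy, Set.uIoo_of_le (by norm_num)]
    simp [cylQ, h01, and_comm]
  | cons a t ih =>
    intro hall
    have ha : 1 ≤ a := hall a (by simp)
    have ht : ∀ b ∈ t, 1 ≤ b := fun b hb => hall b (by simp [hb])
    have hIH := ih ht
    obtain ⟨hxm, hym⟩ := endpoints_mem ht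
    ext ξ
    simp only [cylQ, Set.mem_setOf_eq, Set.mem_inter_iff, List.length_cons]
    constructor
    · rintro ⟨hirr, hmem, hq⟩
      rw [forall_lt_succ'] at hq
      obtain ⟨hq0, hqs⟩ := hq
      have hg := gauss_mem hirr hmem
      have hgcyl : gaussMap ξ ∈ cylQ t := by
        refine ⟨hg.1, hg.2, fun k hk => ?_⟩
        have := hqs k hk
        rwa [partQuotN_succ] at this
      rw [hIH] at hgcyl
      have hfr : Int.fract ξ⁻¹ ∈ Set.uIoo (xe t) (ye t) := hgcyl.2
      have hq0' : (⌊ξ⁻¹⌋).toNat = a := by simpa [partQuotN] using hq0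
      have := (key ha hxm hym).1 ⟨hmem, hq0', hfr⟩
      rw [xe_cons a ha t ht, ye_cons a ha t ht]
      exact ⟨hirr, this⟩
    · rintro ⟨hirr, hmem⟩
      rw [xe_cons a ha t ht, ye_cons a ha t ht] at hmem
      obtain ⟨hIoo, hq0, hfr⟩ := (key ha hxm hym).2 hmem
      have hg := gauss_mem hirr hIoo
      have hgcyl : gaussMap ξ ∈ cylQ t := by
        rw [hIH]; exact ⟨hg.1, hfr⟩
      refine ⟨hirr, hIoo, ?_⟩
      rw [forall_lt_succ']
      constructor
      · simpa [partQuotN] using hq0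
      · intro k hk
        rw [partQuotN_succ]
        exact hgcyl.2.2 k hk

lemma not_irrational_null : volume {x : ℝ | ¬ Irrational x} = 0 := by
  have : {x : ℝ | ¬ Irrational x} = Set.range ((↑) : ℚ → ℝ) := by
    ext x; simp [Irrational]
  rw [this]
  exact (Set.countable_range _).measure_zero _

lemma volume_irr_inter (S : Set ℝ) : volume ({ξ | Irrational ξ} ∩ S) = volume S := by
  have : {ξ : ℝ | Irrational ξ} ∩ S = S \ {x | ¬ Irrational x} := by
    ext x; simp [Set.mem_diff, and_comm]
  rw [this, measure_diff_null not_irrational_null]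

lemma volume_cyl {l : List ℕ} (h : ∀ a ∈ l, 1 ≤ a) :
    volume (cylQ l) = ENNReal.ofReal (1 / (((qq' l : ℝ) + qq l) * qq l)) := by
  rw [cylQ_eq l h, volume_irr_inter]
  have hq : (0:ℝ) < qq l := qq_pos h
  have hq2 : (0:ℝ) < (qq l : ℝ) + qq' l := by positivity
  have habs : |xe l - ye l| = 1 / (((qq' l : ℝ) + qq l) * qq l) := by
    have hdetZ : ((pp l : ℤ) * qq' l - qq l * pp' l) = -(-1) ^ l.length := by
      have := det l; linarith
    have hdetR : |(pp l : ℝ) * qq' l - qq l * pp' l| = 1 := by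
      have : ((pp l : ℝ) * qq' l - qq l * pp' l) = (((pp l : ℤ) * qq' l - qq l * pp' l : ℤ) : ℝ) := by
        push_cast; ring
      rw [this, hdetZ]
      push_cast
      rw [abs_neg, abs_pow, abs_neg, abs_one, one_pow]
    have hnum : xe l - ye l = ((pp l : ℝ) * qq' l - qq l * pp' l) / ((qq l) * ((qq l : ℝ) + qq' l)) := by
      unfold xe ye
      field_simp
      ring
    rw [hnum, abs_div, hdetR, abs_of_pos (by positivity)]
    rw [one_div, one_div]
    congr 1
    ring
  rw [Set.uIoo, Real.volume_Ioo, max_sub_min_eq_abs, ← habs]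
  congr 1
  rw [abs_sub_comm]

end Stmt10
namespace Stmt10

lemma iter_mem {ξ : ℝ} (h1 : Irrational ξ) (h2 : ξ ∈ Set.Ioo (0:ℝ) 1) (k : ℕ) :
    Irrational (gaussMap^[k] ξ) ∧ gaussMap^[k] ξ ∈ Set.Ioo (0:ℝ) 1 := by
  induction k with
  | zero => exact ⟨h1, h2⟩
  | succ n ih =>
    rw [Function.iterate_succ_apply']
    exact gauss_mem ih.1 ih.2

lemma one_le_partQuotN {ξ : ℝ} (h1 : Irrational ξ) (h2 : ξ ∈ Set.Ioo (0:ℝ) 1) (k : ℕ) :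
    1 ≤ partQuotN ξ k := by
  obtain ⟨hi, hm⟩ := iter_mem h1 h2 k
  have : 1 < (gaussMap^[k] ξ)⁻¹ := one_lt_inv_iff₀.2 ⟨hm.1, hm.2⟩
  have hfl : (1:ℤ) ≤ ⌊(gaussMap^[k] ξ)⁻¹⌋ := by
    rw [Int.le_floor]; push_cast; linarith
  unfold partQuotN
  omega

lemma two_le_partQuotN_zero {ξ : ℝ} (h1 : Irrational ξ)
    (h2 : ξ ∈ Set.Ioc (0:ℝ) (1/2)) : 2 ≤ partQuotN ξ 0 := by
  have hlt : ξ < 1/2 := lt_of_le_of_ne h2.2 (by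
    intro h; exact (h1.ne_rat (1/2)) (by push_cast at *; linarith))
  have hpos : 0 < ξ := h2.1
  have : (2:ℝ) < ξ⁻¹ := by
    have := inv_strictAnti₀ hpos hlt
    rwa [show ((1:ℝ)/2)⁻¹ = 2 by norm_num] at this
  have hfl : (2:ℤ) ≤ ⌊ξ⁻¹⌋ := by rw [Int.le_floor]; push_cast; linarith
  unfold partQuotN
  simp only [Function.iterate_zero_apply]
  omega

lemma cylQ_subset_Ioc {l : List ℕ} (h : GoodList l) :
    cylQ l ⊆ Set.Ioc (0:ℝ) (1/2) := by
  rintro ξ ⟨hirr, hmem, hq⟩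
  have hne := h.ne_nil
  have hlen : 0 < l.length := List.length_pos_iff.2 hne
  have h0 := hq 0 hlen
  have hhead : l.getD 0 0 = l.headI := by cases l <;> simp
  have h2 : 2 ≤ partQuotN ξ 0 := by rw [h0, hhead]; exact h.2
  have hfl : (2:ℤ) ≤ ⌊ξ⁻¹⌋ := by
    unfold partQuotN at h2
    simp only [Function.iterate_zero_apply] at h2
    omega
  have hinv : (2:ℝ) ≤ ξ⁻¹ := le_trans (by push_cast; exact_mod_cast hfl) (Int.floor_le _)
  refine ⟨hmem.1, ?_⟩
  have h2pos : (0:ℝ) < 2 := by norm_num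
  calc ξ = (ξ⁻¹)⁻¹ := (inv_inv ξ).symm
  _ ≤ 2⁻¹ := inv_anti₀ h2pos hinv
  _ = 1/2 := by norm_num

noncomputable def quotList (ξ : ℝ) (n : ℕ) : List ℕ := (List.range n).map (partQuotN ξ)

@[simp] lemma quotList_length (ξ : ℝ) (n : ℕ) : (quotList ξ n).length = n := by
  simp [quotList]

lemma quotList_getD {ξ : ℝ} {n k : ℕ} (hk : k < n) :
    (quotList ξ n).getD k 0 = partQuotN ξ k := by
  rw [List.getD_eq_getElem _ _ (by simpa [quotList] using hk)]
  simp [quotList]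

lemma mem_cylQ_quotList {ξ : ℝ} (h1 : Irrational ξ) (h2 : ξ ∈ Set.Ioo (0:ℝ) 1) (n : ℕ) :
    ξ ∈ cylQ (quotList ξ n) := by
  refine ⟨h1, h2, fun k hk => ?_⟩
  rw [quotList_getD (by simpa using hk)]

lemma goodList_quotList {ξ : ℝ} (h1 : Irrational ξ) (h2 : ξ ∈ Set.Ioc (0:ℝ) (1/2)) (n : ℕ)
    (hn : 0 < n) : GoodList (quotList ξ n) := by
  have h2' : ξ ∈ Set.Ioo (0:ℝ) 1 := ⟨h2.1, lt_of_le_of_lt h2.2 (by norm_num)⟩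
  constructor
  · intro a ha
    simp only [quotList, List.mem_map, List.mem_range] at ha
    obtain ⟨k, -, rfl⟩ := ha
    exact one_le_partQuotN h1 h2' k
  · have : (quotList ξ n).headI = partQuotN ξ 0 := by
      cases n; · omega
      · simp [quotList, List.range_succ_eq_map]
    rw [this]
    exact two_le_partQuotN_zero h1 h2

lemma convDen_eq_aux {ξ : ℝ} {l : List ℕ}
    (h : ∀ k < l.length, partQuotN ξ k = l.getD k 0) :
    ∀ k, k ≤ l.length → qq (l.take k) = convDen ξ k ∧
      qq' (l.take k) = if k = 0 then 0 else convDen ξ (k-1) := by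
  intro k
  induction k with
  | zero => intro _; simp [convDen]
  | succ j ih =>
    intro hj
    have hjl : j < l.length := by omega
    obtain ⟨ih1, ih2⟩ := ih (by omega)
    have htake : l.take (j+1) = l.take j ++ [l.getD j 0] := by
      rw [List.getD_eq_getElem _ _ hjl]
      exact (List.take_concat_get' l j hjl).symm
    obtain ⟨hA, hB, -, -⟩ := mat_append (l.take j) (l.getD j 0)
    rw [htake, hA, hB]
    rw [← h j hjl, ih1, ih2]
    constructor
    · cases j with
      | zero => simp [convDen]
      | succ i =>
        simp only [Nat.succ_ne_zero, if_false]
        show partQuotN ξ (i+1) * convDen ξ (i+1) + convDen ξ i = convDen ξ (i+2)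
        rfl
    · simp

lemma convDen_on_cylQ {ξ : ℝ} {l : List ℕ} (hξ : ξ ∈ cylQ l) (hne : l ≠ []) :
    convDen ξ l.length = qq l ∧ convDen ξ (l.length - 1) = qq' l := by
  obtain ⟨-, -, h⟩ := hξ
  obtain ⟨h1, h2⟩ := convDen_eq_aux h l.length le_rfl
  rw [List.take_length] at h1 h2
  have hlen : l.length ≠ 0 := by simpa using hne
  rw [if_neg hlen] at h2
  exact ⟨h1.symm, h2.symm⟩

lemma cylQ_disjoint {l m : List ℕ} (hlen : l.length = m.length) (hne : l ≠ m) :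
    Disjoint (cylQ l) (cylQ m) := by
  rw [Set.disjoint_left]
  rintro ξ ⟨-, -, hl⟩ ⟨-, -, hm⟩
  apply hne
  apply List.ext_getElem hlen
  intro k hk1 hk2
  have e1 := hl k hk1
  have e2 := hm k (by omega)
  rw [List.getD_eq_getElem _ _ hk1] at e1
  rw [List.getD_eq_getElem _ _ hk2] at e2
  omega

lemma partition (i : ℕ) :
    Set.Ioc (0:ℝ) (1/2) ∩ {ξ | Irrational ξ} =
      ⋃ (x : {y : {l : List ℕ // GoodList l} // y.1.length = i + 1}), cylQ x.1.1 := by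
  ext ξ
  simp only [Set.mem_inter_iff, Set.mem_setOf_eq, Set.mem_iUnion]
  constructor
  · rintro ⟨hmem, hirr⟩
    have h2' : ξ ∈ Set.Ioo (0:ℝ) 1 := ⟨hmem.1, lt_of_le_of_lt hmem.2 (by norm_num)⟩
    exact ⟨⟨⟨quotList ξ (i+1), goodList_quotList hirr hmem (i+1) (by omega)⟩, by simp⟩,
      mem_cylQ_quotList hirr h2' (i+1)⟩
  · rintro ⟨x, hξ⟩
    exact ⟨cylQ_subset_Ioc x.1.2 hξ, hξ.1⟩

lemma measurableSet_cylQ {l : List ℕ} (h : ∀ a ∈ l, 1 ≤ a) : MeasurableSet (cylQ l) := by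
  rw [cylQ_eq l h]
  refine MeasurableSet.inter ?_ measurableSet_Ioo
  have : {ξ : ℝ | Irrational ξ} = (Set.range ((↑) : ℚ → ℝ))ᶜ := by
    ext x; simp [Irrational]
  rw [this]
  exact ((Set.countable_range _).measurableSet).compl

lemma measurable_gaussMap : Measurable gaussMap :=
  measurable_fract.comp measurable_inv

lemma measurable_partQuotN (k : ℕ) : Measurable fun ξ => partQuotN ξ k := by
  unfold partQuotN
  exact (measurable_of_countable Int.toNat).comp
    (Int.measurable_floor.comp (measurable_inv.comp (measurable_gaussMap.iterate k)))

lemma measurable_convDen : ∀ n : ℕ, Measurable fun ξ => convDen ξ n := by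
  intro n
  induction n using Nat.strong_induction_on with
  | _ n ih =>
    match n with
    | 0 => simpa [convDen] using measurable_const
    | 1 => exact measurable_partQuotN 0
    | (k+2) =>
      exact ((measurable_partQuotN (k+1)).mul (ih (k+1) (by omega))).add (ih k (by omega))

end Stmt10
namespace Stmt10

noncomputable def pairOf (l : {l : List ℕ // GoodList l}) : CoprimePairs :=
  ⟨(qq' l.1, qq l.1), (strictq l.2).1, (strictq l.2).2, coprime_qq'_qq l.1⟩

lemma pairOf_bijective : Function.Bijective pairOf := by
  constructor
  · rintro ⟨l, hl⟩ ⟨m, hm⟩ h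
    have h' : (qq' l, qq l) = (qq' m, qq m) := congrArg Subtype.val h
    rw [Prod.mk.injEq] at h'
    exact Subtype.ext (pair_inj (qq l) l m hl hm rfl h'.2.symm h'.1)
  · rintro ⟨⟨p, q⟩, hp, hpq, hco⟩
    obtain ⟨l, hg, hq, hq'⟩ := pair_surj q p hp hpq hco
    refine ⟨⟨l, hg⟩, Subtype.ext ?_⟩
    show (qq' l, qq l) = (p, q)
    rw [hq, hq']

end Stmt10

open Stmt10
theorem stmt10 (r : ℕ → ℕ → ℝ) (hr : ∀ p q : ℕ, 0 ≤ r p q)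
    (hsum : Summable fun x : CoprimePairs =>
      r x.1.1 x.1.2 / (((x.1.1 : ℝ) + x.1.2) * x.1.2)) :
    IntegrableOn (levyFn r) (Set.Ioc (0 : ℝ) (1 / 2)) volume ∧
    ∫ ξ in Set.Ioc (0 : ℝ) (1 / 2), levyFn r ξ =
      ∑' x : CoprimePairs, r x.1.1 x.1.2 / (((x.1.1 : ℝ) + x.1.2) * x.1.2) := by
  classical
  set s : Set ℝ := Set.Ioc (0:ℝ) (1/2) with hs
  set f : ℕ → ℝ → ℝ := fun i ξ => r (convDen ξ i) (convDen ξ (i+1)) with hfdef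
  have hfnn : ∀ i ξ, 0 ≤ f i ξ := fun i ξ => hr _ _
  have hfmeas : ∀ i, Measurable (f i) := fun i =>
    (measurable_of_countable (fun n : ℕ × ℕ => r n.1 n.2)).comp
      ((measurable_convDen i).prodMk (measurable_convDen (i+1)))
  set G : ℝ → ENNReal := fun ξ => ∑' i, ENNReal.ofReal (f i ξ) with hGdef
  have hGmeas : Measurable G :=
    Measurable.ennreal_tsum fun i => ENNReal.measurable_ofReal.comp (hfmeas i)
  set T : ℝ := ∑' x : CoprimePairs, r x.1.1 x.1.2 / (((x.1.1:ℝ) + x.1.2) * x.1.2) with hTdef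
  have hterm_nonneg : ∀ x : CoprimePairs,
      0 ≤ r x.1.1 x.1.2 / (((x.1.1:ℝ) + x.1.2) * x.1.2) := by
    intro x
    apply div_nonneg (hr _ _)
    positivity
  -- step A
  have stepA : ∀ i : ℕ, ∫⁻ ξ in s, ENNReal.ofReal (f i ξ) =
      ∑' (l : {l : List ℕ // GoodList l}),
        (if l.1.length = i + 1 then
          ENNReal.ofReal (r (qq' l.1) (qq l.1)) * volume (cylQ l.1) else 0) := by
    intro i
    have hae : s =ᵐ[volume] ((s ∩ {ξ : ℝ | Irrational ξ} : Set ℝ)) := by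
      rw [MeasureTheory.ae_eq_set]
      constructor
      · refine measure_mono_null (fun x hx => ?_) not_irrational_null
        simp only [Set.mem_diff, Set.mem_inter_iff, Set.mem_setOf_eq] at hx ⊢
        tauto
      · have hempty : (s ∩ {ξ : ℝ | Irrational ξ}) \ s = ∅ := by
          ext x
          simp only [Set.mem_diff, Set.mem_inter_iff, Set.mem_empty_iff_false, iff_false,
            not_and, Set.mem_setOf_eq]
          tauto
        rw [hempty, measure_empty]
    rw [setLIntegral_congr hae, hs, partition i,
      lintegral_iUnion (fun x => measurableSet_cylQ x.1.2.1)
        (fun x y hxy => cylQ_disjoint (x.2.trans y.2.symm)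
          (fun h => hxy (Subtype.ext (Subtype.ext h))))]
    have hterm : ∀ (x : {y : {l : List ℕ // GoodList l} // y.1.length = i + 1}),
        ∫⁻ ξ in cylQ x.1.1, ENNReal.ofReal (f i ξ)
          = ENNReal.ofReal (r (qq' x.1.1) (qq x.1.1)) * volume (cylQ x.1.1) := by
      intro x
      have hconst : ∀ ξ ∈ cylQ x.1.1, ENNReal.ofReal (f i ξ)
          = ENNReal.ofReal (r (qq' x.1.1) (qq x.1.1)) := by
        intro ξ hξ
        have hcd := convDen_on_cylQ hξ x.1.2.ne_nil
        rw [x.2] at hcd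
        simp only [Nat.add_sub_cancel] at hcd
        show ENNReal.ofReal (r (convDen ξ i) (convDen ξ (i+1)))
          = ENNReal.ofReal (r (qq' x.1.1) (qq x.1.1))
        rw [hcd.1, hcd.2]
      rw [setLIntegral_congr_fun (measurableSet_cylQ x.1.2.1) hconst,
        setLIntegral_const]
    rw [tsum_congr hterm]
    have hsupp : Function.support (fun l : {l : List ℕ // GoodList l} =>
        if l.1.length = i + 1 then
          ENNReal.ofReal (r (qq' l.1) (qq l.1)) * volume (cylQ l.1) else 0)
        ⊆ {y : {l : List ℕ // GoodList l} | y.1.length = i + 1} := by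
      intro l hl
      by_contra hcon
      exact hl (if_neg hcon)
    refine Eq.trans (tsum_congr fun b => ?_) (tsum_subtype_eq_of_support_subset hsupp)
    exact (if_pos b.2).symm
  -- step B
  have stepB : ∫⁻ ξ in s, G ξ = ENNReal.ofReal T := by
    simp only [hGdef]
    rw [lintegral_tsum (f := fun i a => ENNReal.ofReal (f i a))
      (fun i => ((hfmeas i).ennreal_ofReal).aemeasurable)]
    rw [tsum_congr stepA, ENNReal.tsum_comm]
    have hinner : ∀ (l : {l : List ℕ // GoodList l}),
        (∑' i, if l.1.length = i + 1 then
          ENNReal.ofReal (r (qq' l.1) (qq l.1)) * volume (cylQ l.1) else 0)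
        = ENNReal.ofReal (r (pairOf l).1.1 (pairOf l).1.2 /
            ((((pairOf l).1.1 : ℝ) + (pairOf l).1.2) * (pairOf l).1.2)) := by
      intro l
      have hlen : 1 ≤ l.1.length := List.length_pos_iff.2 l.2.ne_nil
      rw [tsum_eq_single (l.1.length - 1) (fun j hj => if_neg (by omega))]
      rw [if_pos (by omega), volume_cyl l.2.1,
        ← ENNReal.ofReal_mul (hr _ _), mul_one_div]
      rfl
    rw [tsum_congr hinner]
    have hfinal : (∑' (l : {l : List ℕ // GoodList l}),
        ENNReal.ofReal (r (pairOf l).1.1 (pairOf l).1.2 /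
          ((((pairOf l).1.1 : ℝ) + (pairOf l).1.2) * (pairOf l).1.2)))
        = ∑' x : CoprimePairs,
            ENNReal.ofReal (r x.1.1 x.1.2 / (((x.1.1:ℝ) + x.1.2) * x.1.2)) :=
      (Equiv.ofBijective pairOf pairOf_bijective).tsum_eq
        (fun x : CoprimePairs =>
          ENNReal.ofReal (r x.1.1 x.1.2 / (((x.1.1:ℝ) + x.1.2) * x.1.2)))
    rw [hfinal, ← ENNReal.ofReal_tsum_of_nonneg hterm_nonneg hsum]
  -- step C
  have hfin : ∫⁻ ξ in s, G ξ ≠ ⊤ := by rw [stepB]; exact ENNReal.ofReal_ne_top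
  have haefin : ∀ᵐ ξ ∂(volume.restrict s), G ξ < ⊤ := ae_lt_top hGmeas hfin
  have hcongr : (fun ξ => levyFn r ξ) =ᵐ[volume.restrict s] fun ξ => (G ξ).toReal := by
    filter_upwards [haefin] with ξ hξ
    have hne : (∑' i, ENNReal.ofReal (f i ξ)) ≠ ⊤ := hξ.ne
    have hsummable : Summable fun i => Real.toNNReal (f i ξ) := by
      rw [← ENNReal.tsum_coe_ne_top_iff_summable]
      exact hne
    have hfs : Summable fun i => f i ξ := by
      have h2 := NNReal.summable_coe.2 hsummable
      exact h2.congr fun i => Real.coe_toNNReal _ (hfnn i ξ)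
    have hGval : G ξ = ENNReal.ofReal (∑' i, f i ξ) := by
      rw [ENNReal.ofReal_tsum_of_nonneg (fun i => hfnn i ξ) hfs]
    rw [hGval, ENNReal.toReal_ofReal (tsum_nonneg (fun i => hfnn i ξ))]
    rfl
  have hInt : IntegrableOn (levyFn r) s volume :=
    (integrable_toReal_of_lintegral_ne_top hGmeas.aemeasurable hfin).congr hcongr.symm
  refine ⟨hInt, ?_⟩
  calc ∫ ξ in s, levyFn r ξ = ∫ ξ in s, (G ξ).toReal := integral_congr_ae hcongr
    _ = (∫⁻ ξ in s, G ξ).toReal := integral_toReal hGmeas.aemeasurable haefin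
    _ = T := by rw [stepB, ENNReal.toReal_ofReal (tsum_nonneg hterm_nonneg)]
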